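/- Let n₀, m, m' be positive integers with 4·m' ≤ m, and set a = √(n₀/m) and b = √(n₀/m'). Let v be a vector in EuclideanSpace ℝ (Fin n) with exactly m nonzero entries, each lying in {−a, a}, and let w be a vector with exactly m' nonzero entries, each lying in {−b, b}. Then the inner product satisfies ⟨v, w⟩ ≤ n₀/2, and consequently ‖v − w‖² = 2n₀ − 2⟨v, w⟩ ≥ n₀, so the Euclidean distance between v and w is at least √n₀. -/

import Mathlib

open scoped RealInnerProductSpace

/-- Two vectors from different levels of the construction: `v` has exactly `m` nonzero
entries in `{±√(n₀/m)}` and `w` has exactly `m'` nonzero entries in `{±√(n₀/m')}`, with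
`4m' ≤ m`. Then `⟪v, w⟫ ≤ n₀/2`, hence `‖v - w‖² = 2n₀ - 2⟪v, w⟫ ≥ n₀`, so `v` and `w`
are at Euclidean distance at least `√n₀`. -/
theorem dist_ge_of_different_levels
    (n n₀ m m' : ℕ) (hn₀ : 0 < n₀) (hm : 0 < m) (hm' : 0 < m')
    (hmm : 4 * m' ≤ m)
    (a b : ℝ) (ha : a = Real.sqrt ((n₀ : ℝ) / m)) (hb : b = Real.sqrt ((n₀ : ℝ) / m'))
    (v w : EuclideanSpace ℝ (Fin n))
    (hvcard : (Finset.univ.filter fun i => v i ≠ 0).card = m)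
    (hv : ∀ i, v i ≠ 0 → v i = a ∨ v i = -a)
    (hwcard : (Finset.univ.filter fun i => w i ≠ 0).card = m')
    (hw : ∀ i, w i ≠ 0 → w i = b ∨ w i = -b) :
    (inner ℝ v w : ℝ) ≤ (n₀ : ℝ) / 2 ∧
    ‖v - w‖ ^ 2 = 2 * n₀ - 2 * (inner ℝ v w : ℝ) ∧
    (n₀ : ℝ) ≤ ‖v - w‖ ^ 2 ∧
    Real.sqrt n₀ ≤ dist v w := by
  have hm0 : (0:ℝ) < m := by exact_mod_cast hm
  have hm'0 : (0:ℝ) < m' := by exact_mod_cast hm'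
  have ha0 : 0 ≤ a := ha ▸ Real.sqrt_nonneg _
  have hb0 : 0 ≤ b := hb ▸ Real.sqrt_nonneg _
  have ha2 : a ^ 2 = (n₀ : ℝ) / m := by
    rw [ha, Real.sq_sqrt]; positivity
  have hb2 : b ^ 2 = (n₀ : ℝ) / m' := by
    rw [hb, Real.sq_sqrt]; positivity
  have hinner : (inner ℝ v w : ℝ) = ∑ i, v i * w i := by
    simp [PiLp.inner_apply, RCLike.inner_apply, mul_comm]
  have habs_v : ∀ i, |v i| ≤ a := by
    intro i
    by_cases h : v i = 0
    · simp [h, ha0]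
    · rcases hv i h with h' | h' <;> simp [h', abs_of_nonneg ha0]
  have habs_w : ∀ i, |w i| ≤ b := by
    intro i
    by_cases h : w i = 0
    · simp [h, hb0]
    · rcases hw i h with h' | h' <;> simp [h', abs_of_nonneg hb0]
  set S := Finset.univ.filter fun i => w i ≠ 0 with hS
  have hsum_eq : ∑ i, v i * w i = ∑ i ∈ S, v i * w i := by
    rw [hS]
    refine (Finset.sum_filter_of_ne ?_).symm
    intro i _ hne hzero
    simp [hzero] at hne
  have hsum_le : ∑ i ∈ S, v i * w i ≤ (m' : ℝ) * (a * b) := by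
    calc ∑ i ∈ S, v i * w i ≤ ∑ i ∈ S, a * b := by
          refine Finset.sum_le_sum fun i _ => ?_
          calc v i * w i ≤ |v i * w i| := le_abs_self _
            _ = |v i| * |w i| := abs_mul _ _
            _ ≤ a * b := mul_le_mul (habs_v i) (habs_w i) (abs_nonneg _) ha0
      _ = (m' : ℝ) * (a * b) := by rw [Finset.sum_const, hwcard, nsmul_eq_mul]
  have hkey : (m' : ℝ) * (a * b) ≤ (n₀ : ℝ) / 2 := by
    have hsq : ((m' : ℝ) * (a * b)) ^ 2 ≤ ((n₀ : ℝ) / 2) ^ 2 := by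
      have : ((m' : ℝ) * (a * b)) ^ 2 = (m' : ℝ) ^ 2 * (a ^ 2) * (b ^ 2) := by ring
      have hmm' : (4 : ℝ) * m' ≤ m := by exact_mod_cast hmm
      have heq : (m':ℝ) ^ 2 * ((n₀:ℝ) / m) * ((n₀:ℝ) / m') = ((n₀:ℝ) ^ 2 * m') / m := by
        field_simp
      rw [this, ha2, hb2, heq, div_pow, div_le_div_iff₀ hm0 (by norm_num)]
      nlinarith [mul_le_mul_of_nonneg_left hmm' (sq_nonneg ((n₀:ℝ)))]
    have hXnn : 0 ≤ (m':ℝ) * (a * b) := by positivity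
    have hYnn : 0 ≤ (n₀:ℝ) / 2 := by positivity
    exact (pow_le_pow_iff_left₀ hXnn hYnn two_ne_zero).mp hsq
  have h1 : (inner ℝ v w : ℝ) ≤ (n₀ : ℝ) / 2 := by
    rw [hinner, hsum_eq]; exact hsum_le.trans hkey
  have hnv : ‖v‖ ^ 2 = (n₀ : ℝ) := by
    rw [← real_inner_self_eq_norm_sq]
    have : (inner ℝ v v : ℝ) = ∑ i, v i * v i := by
      rw [PiLp.inner_apply]; simp [ RCLike.inner_apply, mul_comm, sq]
    rw [this]
    have : ∑ i, v i * v i = ∑ i ∈ Finset.univ.filter (fun i => v i ≠ 0), v i * v i := by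
      refine (Finset.sum_filter_of_ne ?_).symm
      intro i _ hne hzero
      simp [hzero] at hne
    rw [this]
    have heach : ∀ i ∈ Finset.univ.filter (fun i => v i ≠ 0), v i * v i = (n₀ : ℝ) / m := by
      intro i hi
      rw [Finset.mem_filter] at hi
      rcases hv i hi.2 with h' | h' <;> rw [h'] <;> rw [← ha2] <;> ring
    rw [Finset.sum_congr rfl heach, Finset.sum_const, hvcard, nsmul_eq_mul]
    field_simp
  have hnw : ‖w‖ ^ 2 = (n₀ : ℝ) := by
    rw [← real_inner_self_eq_norm_sq]
    have : (inner ℝ w w : ℝ) = ∑ i, w i * w i := by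
      rw [PiLp.inner_apply]; simp [ RCLike.inner_apply, mul_comm, sq]
    rw [this]
    have : ∑ i, w i * w i = ∑ i ∈ S, w i * w i := by
      rw [hS]
      refine (Finset.sum_filter_of_ne ?_).symm
      intro i _ hne hzero
      simp [hzero] at hne
    rw [this]
    have heach : ∀ i ∈ S, w i * w i = (n₀ : ℝ) / m' := by
      intro i hi
      rw [hS, Finset.mem_filter] at hi
      rcases hw i hi.2 with h' | h' <;> rw [h'] <;> rw [← hb2] <;> ring
    rw [Finset.sum_congr rfl heach, Finset.sum_const, hS, hwcard, nsmul_eq_mul]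
    field_simp
  have h2 : ‖v - w‖ ^ 2 = 2 * n₀ - 2 * (inner ℝ v w : ℝ) := by
    rw [norm_sub_sq_real, hnv, hnw]; ring
  have h3 : (n₀ : ℝ) ≤ ‖v - w‖ ^ 2 := by rw [h2]; linarith
  refine ⟨h1, h2, h3, ?_⟩
  rw [dist_eq_norm]
  calc Real.sqrt n₀ ≤ Real.sqrt (‖v - w‖ ^ 2) := Real.sqrt_le_sqrt h3
    _ = ‖v - w‖ := Real.sqrt_sq (norm_nonneg _)
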